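/- arXiv:2310.19499 — 3 statements merged into one kernel-verified Lean document; each statement's English description precedes it below -/
import Mathlib

section
/- Let A be a commutative ring and let M⁰ → M¹ → M² be a complex of projective A-modules with differentials d⁰, d¹. If the cohomology H²(M•) = M²/im(d¹) is a projective A-module, then for every A-algebra B the natural map H¹(M•) ⊗_A B → H¹(M• ⊗_A B) is an isomorphism. -/
open TensorProduct

set_option maxHeartbeats 1000000 in
theorem aux_stmt0 {A : Type*} [CommRing A] {M0 M1 M2 : Type*}
    [AddCommGroup M0] [Module A M0] [AddCommGroup M1] [Module A M1]
    [AddCommGroup M2] [Module A M2]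
    (d0 : M0 →ₗ[A] M1) (d1 : M1 →ₗ[A] M2) (hc : d1 ∘ₗ d0 = 0)
    (σ : M2 →ₗ[A] M1) (hσ : d1 ∘ₗ σ ∘ₗ d1 = d1)
    (B : Type*) [CommRing B] [Algebra A B] :
    ∃ e : (B ⊗[A] ↥(Submodule.map (LinearMap.range d0).mkQ (LinearMap.ker d1))) ≃ₗ[B]
        ↥(Submodule.map (LinearMap.range (LinearMap.baseChange B d0)).mkQ
            (LinearMap.ker (LinearMap.baseChange B d1))),
      ∀ x : LinearMap.ker d1,
        e ((1 : B) ⊗ₜ[A]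
            (⟨(LinearMap.range d0).mkQ (x : M1), Submodule.mem_map_of_mem x.2⟩ :
              ↥(Submodule.map (LinearMap.range d0).mkQ (LinearMap.ker d1)))) =
          ⟨(LinearMap.range (LinearMap.baseChange B d0)).mkQ ((1 : B) ⊗ₜ[A] (x : M1)),
            Submodule.mem_map_of_mem (p := LinearMap.ker (LinearMap.baseChange B d1)) (by
              have hx : d1 (x : M1) = 0 := x.2
              simp [LinearMap.mem_ker, LinearMap.baseChange_tmul, hx])⟩ := by
  classical
  set N := LinearMap.range d0 with hN
  set NB := LinearMap.range (LinearMap.baseChange B d0) with hNB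
  set H := Submodule.map N.mkQ (LinearMap.ker d1) with hH
  set HB := Submodule.map NB.mkQ (LinearMap.ker (LinearMap.baseChange B d1)) with hHB
  set p : M1 →ₗ[A] M1 := LinearMap.id - σ ∘ₗ d1 with hpdef
  have hσ' : ∀ m : M1, d1 (σ (d1 m)) = d1 m := fun m => LinearMap.congr_fun hσ m
  have hpker : ∀ m : M1, d1 (p m) = 0 := by
    intro m; simp [hpdef, hσ' m]
  have hpfix : ∀ m : M1, d1 m = 0 → p m = m := by
    intro m hm; simp [hpdef, hm]
  -- the map h : M1 → H, m ↦ class of p m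
  have hmemH : ∀ m : M1, (N.mkQ ∘ₗ p) m ∈ H := fun m =>
    ⟨p m, hpker m, rfl⟩
  set h : M1 →ₗ[A] ↥H := LinearMap.codRestrict H (N.mkQ ∘ₗ p) hmemH with hhdef
  -- the map g : M1/N → (B ⊗ M1)/NB
  have hgcond : N ≤ LinearMap.ker
      ((NB.mkQ.restrictScalars A) ∘ₗ (TensorProduct.mk A B M1 1)) := by
    rintro _ ⟨w, rfl⟩
    simp only [LinearMap.mem_ker, LinearMap.comp_apply, LinearMap.restrictScalars_apply,
      TensorProduct.mk_apply, Submodule.mkQ_apply, Submodule.Quotient.mk_eq_zero]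
    exact ⟨(1 : B) ⊗ₜ w, by simp [LinearMap.baseChange_tmul]⟩
  set g : (M1 ⧸ N) →ₗ[A] ((B ⊗[A] M1) ⧸ NB) :=
    Submodule.liftQ N ((NB.mkQ.restrictScalars A) ∘ₗ (TensorProduct.mk A B M1 1)) hgcond
    with hgdef
  have hg : ∀ m : M1, g (N.mkQ m) = NB.mkQ ((1 : B) ⊗ₜ m) := fun m => rfl
  set φraw : (B ⊗[A] ↥H) →ₗ[B] ((B ⊗[A] M1) ⧸ NB) :=
    (LinearMap.liftBaseChange B g) ∘ₗ (LinearMap.baseChange B H.subtype) with hφrawdef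
  have hφraw : ∀ (b : B) (q : ↥H), φraw (b ⊗ₜ q) = b • g (q : M1 ⧸ N) := by
    intro b q; simp [hφrawdef, LinearMap.baseChange_tmul]
  have hφrawtmul : ∀ (b : B) (m : M1) (hm : d1 m = 0) (q : ↥H), (q : M1 ⧸ N) = N.mkQ m →
      φraw (b ⊗ₜ q) = NB.mkQ (b ⊗ₜ m) := by
    intro b m hm q hq
    rw [hφraw, hq, hg, ← map_smul]
    congr 1
    rw [TensorProduct.smul_tmul', smul_eq_mul, mul_one]
  have hφmem : ∀ c : B ⊗[A] ↥H, φraw c ∈ HB := by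
    intro c
    induction c using TensorProduct.induction_on with
    | zero => simpa using HB.zero_mem
    | tmul b q =>
      obtain ⟨x, hx, hxq⟩ := q.2
      have hx' : d1 x = 0 := hx
      rw [hφrawtmul b x hx' q hxq.symm]
      exact ⟨b ⊗ₜ x, by simp [LinearMap.mem_ker, LinearMap.baseChange_tmul, hx'], rfl⟩
    | add y z hy hz => rw [map_add]; exact HB.add_mem hy hz
  set φ : (B ⊗[A] ↥H) →ₗ[B] ↥HB := LinearMap.codRestrict HB φraw hφmem with hφdef
  -- ψ
  have hhd0 : h ∘ₗ d0 = 0 := by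
    ext m
    have hcd : d1 (d0 m) = 0 := LinearMap.congr_fun hc m
    show N.mkQ (p (d0 m)) = 0
    rw [hpfix _ hcd]
    exact (Submodule.Quotient.mk_eq_zero _).mpr ⟨m, rfl⟩
  set α : (B ⊗[A] M1) →ₗ[B] (B ⊗[A] ↥H) := LinearMap.baseChange B h with hαdef
  have hψcond : NB ≤ LinearMap.ker α := by
    rintro _ ⟨z, rfl⟩
    have : α ∘ₗ LinearMap.baseChange B d0 = 0 := by
      rw [hαdef, ← LinearMap.baseChange_comp, hhd0, LinearMap.baseChange_zero]
    exact LinearMap.congr_fun this z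
  set ψ0 : ((B ⊗[A] M1) ⧸ NB) →ₗ[B] (B ⊗[A] ↥H) := Submodule.liftQ NB α hψcond with hψ0def
  have hψ0 : ∀ z : B ⊗[A] M1, ψ0 (NB.mkQ z) = α z := fun z => rfl
  set ψ : ↥HB →ₗ[B] (B ⊗[A] ↥H) := ψ0 ∘ₗ HB.subtype with hψdef
  -- key computation
  have key : ∀ z : B ⊗[A] M1, ((φ (α z) : ↥HB) : (B ⊗[A] M1) ⧸ NB)
      = NB.mkQ (LinearMap.baseChange B p z) := by
    intro z
    induction z using TensorProduct.induction_on with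
    | zero => simp
    | tmul b m =>
      have hα : α (b ⊗ₜ m) = b ⊗ₜ (h m) := by simp [hαdef, LinearMap.baseChange_tmul]
      rw [hα]
      show φraw (b ⊗ₜ (h m)) = NB.mkQ ((LinearMap.baseChange B p) (b ⊗ₜ[A] m))
      rw [LinearMap.baseChange_tmul]
      exact hφrawtmul b (p m) (hpker m) (h m) rfl
    | add y z hy hz => simp only [map_add, Submodule.coe_add, hy, hz]
  have hφψ : ∀ w : ↥HB, φ (ψ w) = w := by
    rintro ⟨qw, hw⟩
    obtain ⟨y, hy, rfl⟩ := hw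
    apply Subtype.ext
    have hyker : LinearMap.baseChange B d1 y = 0 := hy
    have hby : LinearMap.baseChange B p y = y := by
      have hbp : LinearMap.baseChange B p
          = LinearMap.id - (LinearMap.baseChange B σ) ∘ₗ (LinearMap.baseChange B d1) := by
        rw [hpdef, LinearMap.baseChange_sub, LinearMap.baseChange_id, LinearMap.baseChange_comp]
      rw [hbp]
      simp [hyker]
    show ((φ (ψ0 (NB.mkQ y)) : ↥HB) : (B ⊗[A] M1) ⧸ NB) = NB.mkQ y
    rw [hψ0, key, hby]
  have hψφ : ∀ c : B ⊗[A] ↥H, ψ (φ c) = c := by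
    intro c
    induction c using TensorProduct.induction_on with
    | zero => simp
    | tmul b q =>
      obtain ⟨x, hx, hxq⟩ := q.2
      have hx' : d1 x = 0 := hx
      have h1 : ((φ (b ⊗ₜ q) : ↥HB) : (B ⊗[A] M1) ⧸ NB) = NB.mkQ (b ⊗ₜ x) := by
        rw [hφdef, LinearMap.codRestrict_apply]
        exact hφrawtmul b x hx' q hxq.symm
      have h2 : ψ (φ (b ⊗ₜ q)) = ψ0 (NB.mkQ (b ⊗ₜ x)) := by
        rw [hψdef, LinearMap.comp_apply, Submodule.subtype_apply, h1]
      rw [h2, hψ0, hαdef, LinearMap.baseChange_tmul]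
      congr 1
      apply Subtype.ext
      show N.mkQ (p x) = (q : M1 ⧸ N)
      rw [hpfix x hx']
      exact hxq
    | add y z hy hz => simp only [map_add, hy, hz]
  refine ⟨LinearEquiv.ofLinear φ ψ (LinearMap.ext hφψ) (LinearMap.ext hψφ), ?_⟩
  intro x
  apply Subtype.ext
  show ((φ ((1:B) ⊗ₜ ⟨N.mkQ (x : M1), Submodule.mem_map_of_mem x.2⟩) : ↥HB)
      : (B ⊗[A] M1) ⧸ NB) = NB.mkQ ((1:B) ⊗ₜ (x : M1))
  rw [hφdef, LinearMap.codRestrict_apply]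
  exact hφrawtmul 1 (x : M1) x.2 _ rfl

set_option maxHeartbeats 1000000 in
/-- Base change of H¹ of a three-term complex of projective modules, when H² is projective:
the natural map H¹(M•) ⊗_A B → H¹(M• ⊗_A B) is an isomorphism.  Here H¹ is realized as the
image of ker d¹ in coker d⁰, and the natural map is pinned down by its values on elements
of the form (class of x) ⊗ 1. -/
theorem stmt_0 {A : Type*} [CommRing A] {M0 M1 M2 : Type*}
    [AddCommGroup M0] [Module A M0] [AddCommGroup M1] [Module A M1]
    [AddCommGroup M2] [Module A M2]
    [Module.Projective A M0] [Module.Projective A M1] [Module.Projective A M2]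
    (d0 : M0 →ₗ[A] M1) (d1 : M1 →ₗ[A] M2) (hc : d1 ∘ₗ d0 = 0)
    (hH2 : Module.Projective A (M2 ⧸ LinearMap.range d1))
    (B : Type*) [CommRing B] [Algebra A B] :
    ∃ e : (B ⊗[A] ↥(Submodule.map (LinearMap.range d0).mkQ (LinearMap.ker d1))) ≃ₗ[B]
        ↥(Submodule.map (LinearMap.range (LinearMap.baseChange B d0)).mkQ
            (LinearMap.ker (LinearMap.baseChange B d1))),
      ∀ x : LinearMap.ker d1,
        e ((1 : B) ⊗ₜ[A]
            (⟨(LinearMap.range d0).mkQ (x : M1), Submodule.mem_map_of_mem x.2⟩ :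
              ↥(Submodule.map (LinearMap.range d0).mkQ (LinearMap.ker d1)))) =
          ⟨(LinearMap.range (LinearMap.baseChange B d0)).mkQ ((1 : B) ⊗ₜ[A] (x : M1)),
            Submodule.mem_map_of_mem (p := LinearMap.ker (LinearMap.baseChange B d1)) (by
              have hx : d1 (x : M1) = 0 := x.2
              simp [LinearMap.mem_ker, LinearMap.baseChange_tmul, hx])⟩ := by
  haveI := hH2
  obtain ⟨s2, hs2⟩ := Module.projective_lifting_property (LinearMap.range d1).mkQ
    (LinearMap.id : (M2 ⧸ LinearMap.range d1) →ₗ[A] _) (Submodule.mkQ_surjective _)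
  set π2 : M2 →ₗ[A] M2 := LinearMap.id - s2 ∘ₗ (LinearMap.range d1).mkQ with hπ2def
  have hπ2 : ∀ m : M2, π2 m ∈ LinearMap.range d1 := by
    intro m
    have h1 : (LinearMap.range d1).mkQ (s2 ((LinearMap.range d1).mkQ m))
        = (LinearMap.range d1).mkQ m := LinearMap.congr_fun hs2 _
    have h2 : (LinearMap.range d1).mkQ (π2 m) = 0 := by
      simp only [hπ2def, LinearMap.sub_apply, LinearMap.id_apply, LinearMap.comp_apply,
        map_sub, h1, sub_self]
    simpa [Submodule.Quotient.mk_eq_zero] using h2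
  have hπ2fix : ∀ m ∈ LinearMap.range d1, π2 m = m := by
    rintro _ ⟨w, rfl⟩
    have h0 : (LinearMap.range d1).mkQ (d1 w) = 0 :=
      (Submodule.Quotient.mk_eq_zero _).mpr ⟨w, rfl⟩
    simp [hπ2def, h0]
  haveI : Module.Projective A ↥(LinearMap.range d1) :=
    Module.Projective.of_split (LinearMap.range d1).subtype
      (LinearMap.codRestrict _ π2 hπ2)
      (by ext m; simpa using hπ2fix (m : M2) m.2)
  obtain ⟨t, ht⟩ := Module.projective_lifting_property d1.rangeRestrict
    (LinearMap.id : ↥(LinearMap.range d1) →ₗ[A] _) d1.surjective_rangeRestrict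
  have ht' : ∀ z : ↥(LinearMap.range d1), d1 (t z) = (z : M2) :=
    fun z => congrArg Subtype.val (LinearMap.congr_fun ht z)
  set σ : M2 →ₗ[A] M1 := t ∘ₗ LinearMap.codRestrict _ π2 hπ2 with hσdef
  have hσ : d1 ∘ₗ σ ∘ₗ d1 = d1 := by
    ext m
    have h3 : d1 (σ (d1 m)) = π2 (d1 m) := ht' _
    simp only [LinearMap.comp_apply]
    rw [h3, hπ2fix (d1 m) ⟨m, rfl⟩]
  exact aux_stmt0 d0 d1 hc σ hσ B
end

section
/- Let A be a commutative ring, Λ₀ a free A[[t]]-module of rank n, and ∇ : Λ₀ → Λ₀ an A-linear endomorphism satisfying ∇(t·x) = t·x + t·∇(x) for all x (i.e., ∇(t^m λ) = m t^m λ + t^m ∇(λ)), such that the induced endomorphism of Λ₀/tΛ₀ is nilpotent. Then ∇ restricts to an A-linear automorphism of tΛ₀. -/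
open Pointwise PowerSeries

section aux

variable {A : Type*} [CommRing A] {M : Type*} [AddCommGroup M]
    [Module A M] [Module (PowerSeries A) M] [IsScalarTower A (PowerSeries A) M]

private lemma sc6 (a : A) (f : PowerSeries A) (x : M) : a • (f • x) = f • (a • x) := by
  rw [← algebraMap_smul (PowerSeries A) a x, ← algebraMap_smul (PowerSeries A) a (f • x),
    smul_smul, smul_smul, mul_comm]

private lemma leib_pow6 (nabla : M →ₗ[A] M)
    (hLeib : ∀ x : M, nabla ((X : PowerSeries A) • x) =
      (X : PowerSeries A) • x + (X : PowerSeries A) • nabla x)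
    (m : ℕ) (y : M) :
    nabla ((X ^ m : PowerSeries A) • y)
      = (m : A) • ((X ^ m : PowerSeries A) • y) + (X ^ m : PowerSeries A) • nabla y := by
  induction m with
  | zero => simp
  | succ m ih =>
    have h1 : (X ^ (m + 1) : PowerSeries A) • y = (X : PowerSeries A) • ((X ^ m : PowerSeries A) • y) := by
      rw [smul_smul, ← pow_succ']
    rw [h1, hLeib, ih, smul_add, sc6, smul_smul, ← pow_succ', smul_smul, ← pow_succ',
      smul_smul, ← pow_succ', ← sc6]
    push_cast
    rw [add_smul, one_smul]
    abel

end aux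

section aux2

variable {A : Type*} [CommRing A] {M : Type*} [AddCommGroup M]
    [Module A M] [Module (PowerSeries A) M] [IsScalarTower A (PowerSeries A) M]
    {n : ℕ} (b : Module.Basis (Fin n) (PowerSeries A) M)

include b in
private lemma reg6 (m : ℕ) {y y' : M} (h : (X ^ m : PowerSeries A) • y = (X ^ m : PowerSeries A) • y') :
    y = y' := by
  apply b.repr.injective
  ext i j
  have h2 := congrArg (fun z => b.repr z i) h
  simp only [map_smul, Finsupp.smul_apply, smul_eq_mul] at h2
  have := congrArg (fun f => PowerSeries.coeff (j + m) f) h2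
  simpa [PowerSeries.coeff_X_pow_mul] using this

include b in
private lemma sep6 {y : M} (h : ∀ m : ℕ, ∃ w : M, y = (X ^ m : PowerSeries A) • w) : y = 0 := by
  apply b.repr.injective
  ext i j
  obtain ⟨w, hw⟩ := h (j + 1)
  have h2 := congrArg (fun z => b.repr z i) hw
  simp only [map_smul, Finsupp.smul_apply, smul_eq_mul] at h2
  rw [h2]
  simpa using (PowerSeries.X_pow_dvd_iff.mp (dvd_mul_right _ (b.repr w i))) j (by omega)

end aux2

section aux3

set_option linter.unusedSectionVars false

variable {A : Type*} [CommRing A] {M : Type*} [AddCommGroup M]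
    [Module A M] [Module (PowerSeries A) M] [IsScalarTower A (PowerSeries A) M]
    (nabla : M →ₗ[A] M)
    (hLeib : ∀ x : M, nabla ((X : PowerSeries A) • x) =
      (X : PowerSeries A) • x + (X : PowerSeries A) • nabla x)

include hLeib in
private lemma pres6 (j : ℕ) (u : M) : ∃ w : M, (nabla ^ j) ((X : PowerSeries A) • u) = (X : PowerSeries A) • w := by
  induction j with
  | zero => exact ⟨u, rfl⟩
  | succ j ih =>
    obtain ⟨w, hw⟩ := ih
    refine ⟨w + nabla w, ?_⟩
    rw [pow_succ', Module.End.mul_apply, hw, hLeib, smul_add]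

include hLeib in
private lemma l3surj6 (k : ℕ)
    (hnilX : ∀ x : M, ∃ u : M, (nabla ^ k) x = (X : PowerSeries A) • u)
    {c d : A} (hcd : c * d = 1) (z : M) :
    ∃ y u : M, c • y + nabla y = z + (X : PowerSeries A) • u := by
  refine ⟨∑ j ∈ Finset.range k, ((-1 : A) ^ j * d ^ (j + 1)) • (nabla ^ j) z, ?_⟩
  obtain ⟨u, hu⟩ := hnilX z
  refine ⟨((-1 : A) ^ (k + 1) * d ^ k) • u, ?_⟩
  have key : ∀ j : ℕ, c • (((-1 : A) ^ j * d ^ (j + 1)) • (nabla ^ j) z)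
      + nabla (((-1 : A) ^ j * d ^ (j + 1)) • (nabla ^ j) z)
      = ((-1 : A) ^ j * d ^ j) • (nabla ^ j) z
        - ((-1 : A) ^ (j + 1) * d ^ (j + 1)) • (nabla ^ (j + 1)) z := by
    intro j
    rw [map_smul, smul_smul]
    have h1 : c * ((-1 : A) ^ j * d ^ (j + 1)) = (-1 : A) ^ j * d ^ j := by
      rw [pow_succ]; ring_nf; rw [hcd]; ring
    have h2 : ((-1 : A) ^ (j + 1) * d ^ (j + 1)) = -((-1 : A) ^ j * d ^ (j + 1)) := by ring
    rw [h1, h2, neg_smul, sub_neg_eq_add]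
    simp [pow_succ', Module.End.mul_apply]
  rw [Finset.smul_sum, map_sum, ← Finset.sum_add_distrib]
  rw [Finset.sum_congr rfl fun j _ => key j, Finset.sum_range_sub']
  simp only [pow_zero, one_mul, one_smul, Module.End.pow_apply, Function.iterate_zero, id_eq,
    Module.End.one_apply]
  have hk : (⇑nabla)^[k] z = (X : PowerSeries A) • u := by rw [← Module.End.pow_apply]; exact hu
  have hc : ((-1 : A) ^ (k + 1) * d ^ k) = -((-1 : A) ^ k * d ^ k) := by ring
  rw [hk, hc, neg_smul, smul_neg, ← sc6]
  abel

end aux3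
section aux4

set_option linter.unusedSectionVars false

variable {A : Type*} [CommRing A] {M : Type*} [AddCommGroup M]
    [Module A M] [Module (PowerSeries A) M] [IsScalarTower A (PowerSeries A) M]
    (nabla : M →ₗ[A] M)
    (hLeib : ∀ x : M, nabla ((X : PowerSeries A) • x) =
      (X : PowerSeries A) • x + (X : PowerSeries A) • nabla x)

include hLeib in
private lemma l3inj6 (k : ℕ)
    (hnilX : ∀ x : M, ∃ u : M, (nabla ^ k) x = (X : PowerSeries A) • u)
    {c d : A} (hcd : c * d = 1) {y u : M}
    (h : c • y + nabla y = (X : PowerSeries A) • u) :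
    ∃ v : M, y = (X : PowerSeries A) • v := by
  have key : ∀ j : ℕ, ∃ v : M, y - ((-1 : A) ^ j * d ^ j) • (nabla ^ j) y
      = (X : PowerSeries A) • v := by
    intro j
    induction j with
    | zero => exact ⟨0, by simp⟩
    | succ j ih =>
      obtain ⟨v, hv⟩ := ih
      -- c • (nabla^j y) + nabla^{j+1} y = nabla^j (X • u) = X • w
      have h1 : c • (nabla ^ j) y + (nabla ^ (j + 1)) y = (nabla ^ j) ((X : PowerSeries A) • u) := by
        rw [← h, map_add, map_smul, pow_succ, Module.End.mul_apply]
      obtain ⟨w, hw⟩ := pres6 nabla hLeib j u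
      rw [hw] at h1
      refine ⟨v - ((-1 : A) ^ (j + 1) * d ^ (j + 1)) • w, ?_⟩
      have h2 : (nabla ^ (j + 1)) y = (X : PowerSeries A) • w - c • (nabla ^ j) y := by
        rw [← h1]; abel
      have e1 : ((-1 : A) ^ (j + 1) * d ^ (j + 1)) * c = -((-1 : A) ^ j * d ^ j) := by
        linear_combination ((-1 : A) ^ (j + 1) * d ^ j) * hcd
      have step : y - ((-1 : A) ^ (j + 1) * d ^ (j + 1)) • (nabla ^ (j + 1)) y
          = (y - ((-1 : A) ^ j * d ^ j) • (nabla ^ j) y)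
            - ((-1 : A) ^ (j + 1) * d ^ (j + 1)) • ((X : PowerSeries A) • w) := by
        rw [h2, smul_sub, smul_smul, e1, neg_smul]
        abel
      rw [step, hv, sc6, ← smul_sub]
  obtain ⟨v, hv⟩ := key k
  obtain ⟨u2, hu2⟩ := hnilX y
  refine ⟨v + ((-1 : A) ^ k * d ^ k) • u2, ?_⟩
  have : y = (y - ((-1 : A) ^ k * d ^ k) • (nabla ^ k) y) + ((-1 : A) ^ k * d ^ k) • (nabla ^ k) y := by
    abel
  rw [this, hv, hu2, sc6, ← smul_add]

end aux4
section aux5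

set_option linter.unusedSectionVars false

variable {A : Type*} [CommRing A] [Algebra ℚ A] {M : Type*} [AddCommGroup M]
    [Module A M] [Module (PowerSeries A) M] [IsScalarTower A (PowerSeries A) M]
    {n : ℕ} (b : Module.Basis (Fin n) (PowerSeries A) M)
    (nabla : M →ₗ[A] M)
    (hLeib : ∀ x : M, nabla ((X : PowerSeries A) • x) =
      (X : PowerSeries A) • x + (X : PowerSeries A) • nabla x)

private lemma unit6 (m : ℕ) : ∃ d : A, ((m : A) + 1) * d = 1 := by
  refine ⟨algebraMap ℚ A (((m : ℚ) + 1)⁻¹), ?_⟩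
  have h1 : ((m : A) + 1) = algebraMap ℚ A ((m : ℚ) + 1) := by
    rw [map_add, map_natCast, map_one]
  rw [h1, ← map_mul, mul_inv_cancel₀ (by positivity), map_one]

include b hLeib in
private lemma sinj6 (k : ℕ)
    (hnilX : ∀ x : M, ∃ u : M, (nabla ^ k) x = (X : PowerSeries A) • u)
    {y : M} (hy : y + nabla y = 0) : y = 0 := by
  apply sep6 b
  intro m
  induction m with
  | zero => exact ⟨y, by simp⟩
  | succ m ih =>
    obtain ⟨w, hw⟩ := ih
    have e : (X ^ m : PowerSeries A) • ((((m : A) + 1)) • w + nabla w)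
        = (X ^ m : PowerSeries A) • w + nabla ((X ^ m : PowerSeries A) • w) := by
      rw [leib_pow6 nabla hLeib, smul_add, ← sc6, add_smul, one_smul]
      abel
    rw [← hw, hy] at e
    have e0 : (X ^ m : PowerSeries A) • ((((m : A) + 1)) • w + nabla w)
        = (X ^ m : PowerSeries A) • (0 : M) := by rw [e, smul_zero]
    have e1 := reg6 b m e0
    obtain ⟨d, hd⟩ := unit6 (A := A) m
    obtain ⟨v, hv⟩ := l3inj6 nabla hLeib k hnilX hd (u := 0)
      (by rw [e1, smul_zero])
    exact ⟨v, by rw [hw, hv, smul_smul, ← pow_succ]⟩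

include b hLeib in
private lemma ssurj6 (k : ℕ)
    (hnilX : ∀ x : M, ∃ u : M, (nabla ^ k) x = (X : PowerSeries A) • u)
    (z : M) : ∃ y : M, y + nabla y = z := by
  have step : ∀ (m : ℕ) (zm : M), ∃ w u : M,
      ((m : A) + 1) • w + nabla w = zm + (X : PowerSeries A) • u := by
    intro m zm
    obtain ⟨d, hd⟩ := unit6 (A := A) m
    exact l3surj6 nabla hLeib k hnilX hd zm
  choose W U hWU using step
  let p : ℕ → M × M := fun m => Nat.rec ((0 : M), z)
    (fun m pm => (pm.1 + (X ^ m : PowerSeries A) • W m pm.2, -U m pm.2)) m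
  have hp0 : p 0 = (0, z) := rfl
  have hps : ∀ m, p (m + 1)
      = ((p m).1 + (X ^ m : PowerSeries A) • W m (p m).2, -U m (p m).2) := fun m => rfl
  -- invariant
  have inv : ∀ m, (p m).1 + nabla (p m).1 = z - (X ^ m : PowerSeries A) • (p m).2 := by
    intro m
    induction m with
    | zero => rw [hp0]; simp
    | succ m ih =>
      rw [hps]
      simp only
      rw [map_add, leib_pow6 nabla hLeib]
      have hcomb : (p m).1 + (X ^ m : PowerSeries A) • W m (p m).2
          + (nabla (p m).1 + ((m : A) • ((X ^ m : PowerSeries A) • W m (p m).2)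
            + (X ^ m : PowerSeries A) • nabla (W m (p m).2)))
          = ((p m).1 + nabla (p m).1)
            + (X ^ m : PowerSeries A) • ((((m : A) + 1)) • W m (p m).2 + nabla (W m (p m).2)) := by
        rw [smul_add, ← sc6, add_smul, one_smul]
        abel
      rw [hcomb, ih, hWU m (p m).2, smul_add, smul_smul, ← pow_succ, smul_neg]
      abel
  -- telescoping
  have tele : ∀ j m : ℕ, j ≤ m → ∃ w : M,
      (p m).1 - (p j).1 = (X ^ j : PowerSeries A) • w := by
    intro j m hjm
    induction m, hjm using Nat.le_induction with
    | base => exact ⟨0, by simp⟩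
    | succ m hjm ih =>
      obtain ⟨w, hw⟩ := ih
      refine ⟨w + (X ^ (m - j) : PowerSeries A) • W m (p m).2, ?_⟩
      rw [hps]
      simp only
      have hXm : (X ^ m : PowerSeries A) = (X ^ j : PowerSeries A) * (X ^ (m - j) : PowerSeries A) := by
        rw [← pow_add]
        congr 1
        omega
      rw [smul_add, ← hw, hXm, mul_smul]
      abel
  -- the limit
  let g : Fin n → PowerSeries A := fun i =>
    PowerSeries.mk fun j => PowerSeries.coeff j (b.repr (p (j + 1)).1 i)
  let Y : M := b.repr.symm (Finsupp.equivFunOnFinite.symm g)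
  have hYrepr : ∀ i, b.repr Y i = g i := by
    intro i
    show (b.repr (b.repr.symm (Finsupp.equivFunOnFinite.symm g))) i = g i
    rw [LinearEquiv.apply_symm_apply]
    rfl
  have hlim : ∀ m, ∃ w : M, Y - (p m).1 = (X ^ m : PowerSeries A) • w := by
    intro m
    have hdvd : ∀ i, (X ^ m : PowerSeries A) ∣ (b.repr (Y - (p m).1) i) := by
      intro i
      rw [PowerSeries.X_pow_dvd_iff]
      intro j hj
      obtain ⟨w, hw⟩ := tele (j + 1) m (by omega)
      have hco : b.repr (p m).1 i - b.repr (p (j + 1)).1 i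
          = (X ^ (j + 1) : PowerSeries A) * b.repr w i := by
        have h2 := congrArg (fun zz => b.repr zz i) hw
        simpa [map_sub, Finsupp.sub_apply, map_smul, Finsupp.smul_apply, smul_eq_mul] using h2
      have hcoeff0 : PowerSeries.coeff j (b.repr (p m).1 i - b.repr (p (j + 1)).1 i) = 0 := by
        rw [hco]
        exact (PowerSeries.X_pow_dvd_iff.mp (dvd_mul_right _ _)) j (by omega)
      have hgj : PowerSeries.coeff j (g i) = PowerSeries.coeff j (b.repr (p m).1 i) := by
        show PowerSeries.coeff j (PowerSeries.mk fun l =>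
          PowerSeries.coeff l (b.repr (p (l + 1)).1 i)) = _
        rw [PowerSeries.coeff_mk]
        rw [map_sub] at hcoeff0
        exact (sub_eq_zero.mp hcoeff0).symm
      rw [map_sub, Finsupp.sub_apply, map_sub, hYrepr, hgj, sub_self]
    choose h' hh' using hdvd
    refine ⟨b.repr.symm (Finsupp.equivFunOnFinite.symm h'), ?_⟩
    apply b.repr.injective
    ext i : 1
    rw [map_smul, Finsupp.smul_apply, smul_eq_mul, LinearEquiv.apply_symm_apply]
    show b.repr (Y - (p m).1) i = X ^ m * (Finsupp.equivFunOnFinite.symm h') i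
    rw [hh' i]
    rfl
  -- conclude
  refine ⟨Y, ?_⟩
  have hfin : ∀ m, ∃ w : M, (Y + nabla Y) - z = (X ^ m : PowerSeries A) • w := by
    intro m
    obtain ⟨w, hw⟩ := hlim m
    refine ⟨w + (m : A) • w + nabla w - (p m).2, ?_⟩
    have h1 : Y = (p m).1 + (X ^ m : PowerSeries A) • w := by rw [← hw]; abel
    rw [h1, map_add, leib_pow6 nabla hLeib]
    have h2 : (p m).1 + (X ^ m : PowerSeries A) • w
        + (nabla (p m).1 + ((m : A) • ((X ^ m : PowerSeries A) • w)
          + (X ^ m : PowerSeries A) • nabla w))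
        = ((p m).1 + nabla (p m).1)
          + (X ^ m : PowerSeries A) • (w + (m : A) • w + nabla w) := by
      rw [smul_add, smul_add, ← sc6]
      abel
    rw [h2, inv m, smul_sub, smul_add, smul_add, ← sc6]
    abel
  have := sep6 b hfin
  rw [sub_eq_zero] at this
  exact this

end aux5

/-- Let Λ₀ be a free module of finite rank over A[[t]] (A a ℚ-algebra) and ∇ an A-linear
endomorphism with ∇(t·x) = t·x + t·∇(x), whose induced endomorphism of Λ₀/tΛ₀ is nilpotent.
Then ∇ restricts to an A-linear automorphism of tΛ₀. -/
theorem stmt_6 {A : Type*} [CommRing A] [Algebra ℚ A] {M : Type*} [AddCommGroup M]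
    [Module A M] [Module (PowerSeries A) M] [IsScalarTower A (PowerSeries A) M]
    {n : ℕ} (b : Module.Basis (Fin n) (PowerSeries A) M)
    (nabla : M →ₗ[A] M)
    (hLeib : ∀ x : M, nabla ((PowerSeries.X : PowerSeries A) • x) =
      (PowerSeries.X : PowerSeries A) • x + (PowerSeries.X : PowerSeries A) • nabla x)
    (k : ℕ)
    (hnil : ∀ x : M, (nabla ^ k) x ∈
      ((Ideal.span {(PowerSeries.X : PowerSeries A)}) • (⊤ : Submodule (PowerSeries A) M))) :
    Set.BijOn nabla
      (((Ideal.span {(PowerSeries.X : PowerSeries A)}) •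
        (⊤ : Submodule (PowerSeries A) M) : Submodule (PowerSeries A) M) : Set M)
      (((Ideal.span {(PowerSeries.X : PowerSeries A)}) •
        (⊤ : Submodule (PowerSeries A) M) : Submodule (PowerSeries A) M) : Set M) := by
  have memN : ∀ x : M, x ∈ ((Ideal.span {(PowerSeries.X : PowerSeries A)}) •
      (⊤ : Submodule (PowerSeries A) M) : Submodule (PowerSeries A) M)
      ↔ ∃ y : M, x = (X : PowerSeries A) • y := by
    intro x
    rw [Submodule.ideal_span_singleton_smul, ← SetLike.mem_coe, Submodule.coe_pointwise_smul]
    constructor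
    · intro hx
      obtain ⟨y, -, hy⟩ := Set.mem_smul_set.mp hx
      exact ⟨y, hy.symm⟩
    · rintro ⟨y, rfl⟩
      exact Set.smul_mem_smul_set trivial
  have hnilX : ∀ x : M, ∃ u : M, (nabla ^ k) x = (X : PowerSeries A) • u :=
    fun x => (memN _).mp (hnil x)
  refine ⟨?_, ?_, ?_⟩
  · -- MapsTo
    intro x hx
    obtain ⟨y, rfl⟩ := (memN x).mp hx
    exact (memN _).mpr ⟨y + nabla y, by rw [hLeib, smul_add]⟩
  · -- InjOn
    intro x1 h1 x2 h2 heq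
    obtain ⟨y1, rfl⟩ := (memN x1).mp h1
    obtain ⟨y2, rfl⟩ := (memN x2).mp h2
    have e : (X ^ 1 : PowerSeries A) • (y1 + nabla y1) = (X ^ 1 : PowerSeries A) • (y2 + nabla y2) := by
      rw [pow_one, smul_add, smul_add, ← hLeib, ← hLeib]
      exact heq
    have e2 := reg6 b 1 e
    have e3 : (y1 - y2) + nabla (y1 - y2) = 0 := by
      rw [map_sub]
      rw [← sub_eq_zero] at e2
      rw [← e2]
      abel
    have := sinj6 b nabla hLeib k hnilX e3
    rw [sub_eq_zero] at this
    rw [this]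
  · -- SurjOn
    intro x hx
    obtain ⟨zz, rfl⟩ := (memN x).mp hx
    obtain ⟨y, hy⟩ := ssurj6 b nabla hLeib k hnilX zz
    refine ⟨(X : PowerSeries A) • y, (memN _).mpr ⟨y, rfl⟩, ?_⟩
    rw [hLeib, ← smul_add, hy]
end

section
/- Let D be an n × n diagonal matrix over a field with diagonal entries t^{μ₁},…,t^{μ_n} in K((t)) where μ = (μ₁,…,μ_n) ∈ ℤⁿ, and let Λ_μ = D · K[[t]]ⁿ be the corresponding lattice. If λ, μ ∈ ℤⁿ and there exists an upper-triangular unipotent matrix V ∈ GL_n(K((t))) with V · Λ_μ = Λ_λ, then λ = μ. -/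
/-- Membership in the lattice spanned by `Pi.single i (g i)` is componentwise. -/
lemma mem_span_single_range_iff {R M : Type*} [Semiring R] [AddCommMonoid M] [Module R M]
    {n : ℕ} (g : Fin n → M) (x : Fin n → M) :
    x ∈ Submodule.span R (Set.range fun i : Fin n => Pi.single i (g i)) ↔
      ∀ i, ∃ c : R, c • g i = x i := by
  rw [Submodule.mem_span_range_iff_exists_fun]
  constructor
  · rintro ⟨c, rfl⟩ i
    refine ⟨c i, ?_⟩
    simp [Finset.sum_apply, Pi.single_apply]
  · intro hx
    choose c hc using hx
    refine ⟨c, funext fun j => ?_⟩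
    simp only [Finset.sum_apply, Pi.smul_apply, Pi.single_apply]
    rw [Finset.sum_eq_single j]
    · simp [hc j]
    · intro b _ hb; rw [if_neg (by exact fun hh => hb hh.symm), smul_zero]
    · simp

/-- If `c • t^b = t^a` over the power series, then `b ≤ a`. -/
lemma aux_le {K : Type*} [Field K] {a b : ℤ} {c : PowerSeries K}
    (h : c • (HahnSeries.single b (1:K) : LaurentSeries K) = HahnSeries.single a 1) : b ≤ a := by
  by_contra hab
  push_neg at hab
  have := congrArg (fun x : LaurentSeries K => x.coeff a) h
  simp only [Algebra.smul_def, LaurentSeries.coe_algebraMap] at this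
  rw [show a = (a - b) + b by ring, HahnSeries.coeff_mul_single_add] at this
  rw [HahnSeries.coeff_single_same] at this
  rw [PowerSeries.coeff_coe] at this
  rw [if_pos (by omega)] at this
  simp at this

/-- Disjointness of semi-infinite cells in the affine Grassmannian of GL_n: if a unipotent
upper-triangular matrix V over K((t)) maps the lattice Λ_μ = span{t^{μ_i} e_i} onto
Λ_λ = span{t^{λ_i} e_i}, then λ = μ. -/
theorem stmt_18 {K : Type*} [Field K] {n : ℕ} (μ lam : Fin n → ℤ)
    (V : Matrix (Fin n) (Fin n) (LaurentSeries K))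
    (hVtri : ∀ i j : Fin n, j < i → V i j = 0)
    (hVuni : ∀ i : Fin n, V i i = 1)
    (h : Submodule.map ((Matrix.mulVecLin V).restrictScalars (PowerSeries K))
        (Submodule.span (PowerSeries K)
          (Set.range fun i : Fin n =>
            Pi.single i (HahnSeries.single (μ i) (1 : K) : LaurentSeries K))) =
      Submodule.span (PowerSeries K)
        (Set.range fun i : Fin n =>
          Pi.single i (HahnSeries.single (lam i) (1 : K) : LaurentSeries K))) :
    lam = μ := by
  classical
  funext i
  -- Forward direction: λ i ≤ μ i
  have hle : lam i ≤ μ i := by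
    have hmem : Pi.single i (HahnSeries.single (μ i) (1 : K) : LaurentSeries K) ∈
        Submodule.span (PowerSeries K)
          (Set.range fun i : Fin n =>
            Pi.single i (HahnSeries.single (μ i) (1 : K) : LaurentSeries K)) :=
      Submodule.subset_span ⟨i, rfl⟩
    have himg := h ▸ Submodule.mem_map_of_mem
      (f := (Matrix.mulVecLin V).restrictScalars (PowerSeries K)) hmem
    rw [mem_span_single_range_iff] at himg
    obtain ⟨c, hc⟩ := himg i
    apply aux_le (c := c)
    rw [hc]
    simp only [LinearMap.coe_restrictScalars, Matrix.mulVecLin_apply, Matrix.mulVec, dotProduct]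
    rw [Finset.sum_eq_single i]
    · simp [Pi.single_apply, hVuni i]
    · intro b _ hb; simp [Pi.single_apply, hb]
    · simp
  -- Reverse direction: μ i ≤ λ i
  have hge : μ i ≤ lam i := by
    have hmem : Pi.single i (HahnSeries.single (lam i) (1 : K) : LaurentSeries K) ∈
        Submodule.map ((Matrix.mulVecLin V).restrictScalars (PowerSeries K))
          (Submodule.span (PowerSeries K)
            (Set.range fun i : Fin n =>
              Pi.single i (HahnSeries.single (μ i) (1 : K) : LaurentSeries K))) := by
      rw [h]; exact Submodule.subset_span ⟨i, rfl⟩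
    obtain ⟨x, hx, hVx⟩ := hmem
    simp only [LinearMap.coe_restrictScalars, Matrix.mulVecLin_apply] at hVx
    -- components of x above i vanish
    have hzero : ∀ j : Fin n, i < j → x j = 0 := by
      by_contra hcon
      push_neg at hcon
      obtain ⟨j₀, hj₀1, hj₀2⟩ := hcon
      set S : Finset (Fin n) := Finset.univ.filter (fun j => i < j ∧ x j ≠ 0) with hS
      have hSne : S.Nonempty := ⟨j₀, Finset.mem_filter.2 ⟨Finset.mem_univ _, hj₀1, hj₀2⟩⟩
      set j := S.max' hSne with hj
      have hjS : j ∈ S := S.max'_mem hSne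
      simp only [hS, Finset.mem_filter] at hjS
      have hcomp := congrArg (fun v : Fin n → LaurentSeries K => v j) hVx
      simp only [Matrix.mulVec, dotProduct] at hcomp
      rw [Finset.sum_eq_single j] at hcomp
      · rw [hVuni j, one_mul] at hcomp
        rw [Pi.single_apply, if_neg (by exact fun hh => absurd hh (by
          intro hh'; exact absurd hh' (ne_of_gt hjS.2.1)))] at hcomp
        exact hjS.2.2 hcomp
      · intro b _ hb
        rcases lt_or_gt_of_ne hb with hlt | hgt
        · -- b < j : then x b = 0? No: b < j means V j b = 0
          rw [hVtri j b hlt, zero_mul]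
        · -- b > j : x b = 0 by maximality
          have hxb : x b = 0 := by
            by_contra hxb
            have hbS : b ∈ S := by
              simp only [hS, Finset.mem_filter]
              exact ⟨Finset.mem_univ b, lt_trans hjS.2.1 hgt, hxb⟩
            exact absurd (S.le_max' b hbS) (not_le_of_gt hgt)
          rw [hxb, mul_zero]
      · simp
    -- component i of x is t^{λ i}
    have hxi : x i = HahnSeries.single (lam i) (1 : K) := by
      have hcomp := congrArg (fun v : Fin n → LaurentSeries K => v i) hVx
      simp only [Matrix.mulVec, dotProduct] at hcomp
      rw [Finset.sum_eq_single i] at hcomp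
      · rw [hVuni i, one_mul] at hcomp
        rw [Pi.single_apply, if_pos rfl] at hcomp
        exact hcomp
      · intro b _ hb
        rcases lt_or_gt_of_ne hb with hlt | hgt
        · rw [hVtri i b hlt, zero_mul]
        · rw [hzero b hgt, mul_zero]
      · simp
    rw [SetLike.mem_coe, mem_span_single_range_iff] at hx
    obtain ⟨c, hc⟩ := hx i
    exact aux_le (c := c) (by rw [hc, hxi])
  omega
end
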